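/- Let n ≥ 1 and let d_0 = d_1 = ⋯ = d_n = 1. Then for every checkpoint set C ⊆ {0,…,n} with 0 ∈ C and n ∈ C, the cost Σ_{i ∈ C} d_i + max over segments of C of the segment's d-sum is at least 2√n. -/
import Mathlib


/-- `h` and `i` are consecutive checkpoints of `C`. -/
def ConsecPair (C : Finset ℕ) (h i : ℕ) : Prop :=
  h ∈ C ∧ i ∈ C ∧ h < i ∧ ∀ c ∈ C, c ≤ h ∨ i ≤ c

/-- The maximum `d`-sum of a segment of `C` (a maximal block of consecutive
non-checkpoint indices, i.e. the indices strictly between two consecutive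
checkpoints); it is `0` when every segment is empty. -/
noncomputable def maxSegSum (d : ℕ → ℝ) (C : Finset ℕ) : ℝ :=
  sSup {x : ℝ | ∃ h i, ConsecPair C h i ∧ x = ∑ k ∈ Finset.Ioo h i, d k}

/-- Lower bound of Chen et al.'s `O(√n)` claim: with unit data sizes
`d_0 = ⋯ = d_n = 1`, every checkpoint set `C ⊆ {0,…,n}` with `0 ∈ C` and
`n ∈ C` has cost (checkpoint memory plus maximum segment sum) at least `2√n`. -/
theorem sqrt_lower_bound (n : ℕ) (hn : 1 ≤ n) (C : Finset ℕ)
    (hC : C ⊆ Finset.range (n + 1)) (h0 : 0 ∈ C) (hnC : n ∈ C) :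
    2 * Real.sqrt n ≤
      (∑ i ∈ C, (1 : ℝ)) + maxSegSum (fun _ => (1 : ℝ)) C := by
  classical
  have h0n : (0 : ℕ) ≠ n := by omega
  set nxt : ℕ → ℕ := fun c => sInf {x | x ∈ C ∧ c < x} with hnxt_def
  have key : ∀ c, c < n → c ∈ C → ConsecPair C c (nxt c) := by
    intro c hcn hc
    have hne : {x | x ∈ C ∧ c < x}.Nonempty := ⟨n, hnC, hcn⟩
    have hmem := Nat.sInf_mem hne
    refine ⟨hc, hmem.1, hmem.2, ?_⟩
    intro c' hc'
    by_cases h : c' ≤ c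
    · exact Or.inl h
    · exact Or.inr (Nat.sInf_le ⟨hc', by omega⟩)
  set g := (C.erase n).sup (fun c => nxt c - c) with hg
  have h0e : 0 ∈ C.erase n := Finset.mem_erase.mpr ⟨h0n, h0⟩
  obtain ⟨c₀, hc₀, hgc₀⟩ :=
    Finset.exists_mem_eq_sup (C.erase n) ⟨0, h0e⟩ (fun c => nxt c - c)
  have hc₀C : c₀ ∈ C := (Finset.mem_erase.mp hc₀).2
  have hc₀n : c₀ < n := by
    have h1 := hC hc₀C
    rw [Finset.mem_range] at h1
    have h2 := (Finset.mem_erase.mp hc₀).1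
    omega
  have hpair := key c₀ hc₀n hc₀C
  have hg1 : 1 ≤ g := by
    rw [hg, hgc₀]
    have := hpair.2.2.1
    omega
  have hcover : Finset.range n ⊆ (C.erase n).biUnion
      (fun c => Finset.Ico c (nxt c)) := by
    intro x hx
    rw [Finset.mem_range] at hx
    have hSne : (C.filter (· ≤ x)).Nonempty :=
      ⟨0, Finset.mem_filter.mpr ⟨h0, Nat.zero_le _⟩⟩
    set c := (C.filter (· ≤ x)).max' hSne with hc
    have hcmem := (C.filter (· ≤ x)).max'_mem hSne
    rw [Finset.mem_filter] at hcmem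
    obtain ⟨hcC, hcx⟩ := hcmem
    have hcn : c < n := by omega
    have hp := key c hcn hcC
    have hxnxt : x < nxt c := by
      by_contra h
      push_neg at h
      have h1 : nxt c ∈ C.filter (· ≤ x) := Finset.mem_filter.mpr ⟨hp.2.1, h⟩
      have h2 := Finset.le_max' _ _ h1
      have h3 := hp.2.2.1
      omega
    exact Finset.mem_biUnion.mpr ⟨c, Finset.mem_erase.mpr ⟨by omega, hcC⟩,
      Finset.mem_Ico.mpr ⟨hcx, hxnxt⟩⟩
  have hcard : n ≤ (C.erase n).card * g := by
    calc n = (Finset.range n).card := (Finset.card_range n).symm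
      _ ≤ ((C.erase n).biUnion (fun c => Finset.Ico c (nxt c))).card :=
          Finset.card_le_card hcover
      _ ≤ ∑ c ∈ C.erase n, (Finset.Ico c (nxt c)).card := Finset.card_biUnion_le
      _ ≤ ∑ c ∈ C.erase n, g := by
          apply Finset.sum_le_sum
          intro c hcm
          rw [Nat.card_Ico, hg]
          exact Finset.le_sup (f := fun c => nxt c - c) hcm
      _ = (C.erase n).card * g := by rw [Finset.sum_const, smul_eq_mul]
  set a := (C.erase n).card with ha
  have ha1 : 1 ≤ a := Finset.card_pos.mpr ⟨0, h0e⟩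
  have hcardC : C.card = a + 1 := by
    have h1 : 1 ≤ C.card := Finset.card_pos.mpr ⟨n, hnC⟩
    rw [ha, Finset.card_erase_of_mem hnC]
    omega
  have hbdd : BddAbove {x : ℝ | ∃ h i, ConsecPair C h i ∧
      x = ∑ k ∈ Finset.Ioo h i, (fun _ => (1 : ℝ)) k} := by
    refine ⟨n, ?_⟩
    rintro x ⟨h', i, hp, rfl⟩
    simp only [Finset.sum_const, nsmul_eq_mul, mul_one, Nat.card_Ioo]
    have hi : i ≤ n := by
      have := hC hp.2.1
      rw [Finset.mem_range] at this
      omega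
    exact_mod_cast Nat.sub_le_of_le_add (by omega)
  have hseg : (g : ℝ) - 1 ≤ maxSegSum (fun _ => (1 : ℝ)) C := by
    have hval : ((g : ℝ) - 1) = ∑ k ∈ Finset.Ioo c₀ (nxt c₀), (fun _ => (1 : ℝ)) k := by
      simp only [Finset.sum_const, nsmul_eq_mul, mul_one, Nat.card_Ioo]
      have h1 : nxt c₀ - c₀ - 1 = g - 1 := by rw [hg, hgc₀]
      rw [h1, Nat.cast_sub hg1, Nat.cast_one]
    have hmem : ((g : ℝ) - 1) ∈ {x : ℝ | ∃ h i, ConsecPair C h i ∧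
        x = ∑ k ∈ Finset.Ioo h i, (fun _ => (1 : ℝ)) k} :=
      ⟨c₀, nxt c₀, hpair, hval⟩
    exact le_csSup hbdd hmem
  have hsum : (∑ i ∈ C, (1 : ℝ)) = C.card := by simp
  have hag : (n : ℝ) ≤ (a : ℝ) * g := by exact_mod_cast hcard
  have haR : (1 : ℝ) ≤ a := by exact_mod_cast ha1
  have hgR : (1 : ℝ) ≤ g := by exact_mod_cast hg1
  have h2sqrt : 2 * Real.sqrt n ≤ (a : ℝ) + g := by
    have h1 : Real.sqrt n ≤ Real.sqrt ((a : ℝ) * g) := Real.sqrt_le_sqrt hag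
    have h2 : Real.sqrt ((a : ℝ) * g) = Real.sqrt a * Real.sqrt g :=
      Real.sqrt_mul (by positivity) _
    nlinarith [sq_nonneg (Real.sqrt a - Real.sqrt g),
      Real.sq_sqrt (show (0 : ℝ) ≤ a by positivity),
      Real.sq_sqrt (show (0 : ℝ) ≤ g by positivity)]
  rw [hsum, hcardC]
  push_cast
  linarith
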